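/- Let g be a real constant, z_b : ℝ → ℝ differentiable, and h, u, w, σ, p̄, p_b : ℝ → ℝ → ℝ continuously differentiable functions of (x,t). Assume that at every point (x,t) the following four equations hold: (i) ∂_t h + ∂_x(h·u) = 0; (ii) ∂_t(h·u) + ∂_x(h·u² + h·p̄) + g·h·∂_x h + (g·h + p_b)·∂_x z_b = 0; (iii) ∂_t(h·w) + ∂_x(h·u·w) = p_b; (iv) ∂_t(h·σ) + ∂_x(h·u·σ) = −6·p_b + 12·p̄. Then at every point (x,t): ∂_t[(h/2)·(u² + w² + σ²/12)] + ∂_x[u·(h/2)·(u² + w² + σ²/12) + u·g·h²/2 + u·h·p̄] − h·p̄·∂_x u − (g·h²/2)·∂_x u + u·(g·h + p_b)·∂_x z_b − w·p_b + σ·p_b/2 − σ·p̄ = 0. -/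

import Mathlib

/-- Partial derivative with respect to the first (space) argument. -/
noncomputable def pdx (f : ℝ → ℝ → ℝ) (x t : ℝ) : ℝ := deriv (fun x' => f x' t) x

/-- Partial derivative with respect to the second (time) argument. -/
noncomputable def pdt (f : ℝ → ℝ → ℝ) (x t : ℝ) : ℝ := deriv (fun t' => f x t') t

lemma hasDerivAt_pdx (f : ℝ → ℝ → ℝ) (hf : ContDiff ℝ 1 (fun p : ℝ × ℝ => f p.1 p.2))
    (x t : ℝ) : HasDerivAt (fun x' => f x' t) (pdx f x t) x := by
  have hdiff : DifferentiableAt ℝ (fun x' => f x' t) x := by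
    exact ((hf.differentiable one_ne_zero) (x, t)).comp x
      (DifferentiableAt.prodMk (differentiableAt_id : DifferentiableAt ℝ (fun y : ℝ => y) x) (differentiableAt_const t))
  exact hdiff.hasDerivAt

lemma hasDerivAt_pdt (f : ℝ → ℝ → ℝ) (hf : ContDiff ℝ 1 (fun p : ℝ × ℝ => f p.1 p.2))
    (x t : ℝ) : HasDerivAt (fun t' => f x t') (pdt f x t) t := by
  have hdiff : DifferentiableAt ℝ (fun t' => f x t') t := by
    exact ((hf.differentiable one_ne_zero) (x, t)).comp t
      (DifferentiableAt.prodMk (differentiableAt_const x) differentiableAt_id)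
  exact hdiff.hasDerivAt

theorem stmt_2 (g : ℝ) (zb : ℝ → ℝ) (hzb : Differentiable ℝ zb)
    (h u w sg pbar pb : ℝ → ℝ → ℝ)
    (hh : ContDiff ℝ 1 (fun p : ℝ × ℝ => h p.1 p.2))
    (hu : ContDiff ℝ 1 (fun p : ℝ × ℝ => u p.1 p.2))
    (hw : ContDiff ℝ 1 (fun p : ℝ × ℝ => w p.1 p.2))
    (hsg : ContDiff ℝ 1 (fun p : ℝ × ℝ => sg p.1 p.2))
    (hpbar : ContDiff ℝ 1 (fun p : ℝ × ℝ => pbar p.1 p.2))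
    (hpb : ContDiff ℝ 1 (fun p : ℝ × ℝ => pb p.1 p.2))
    (mass : ∀ x t : ℝ, pdt h x t + pdx (fun x t => h x t * u x t) x t = 0)
    (momx : ∀ x t : ℝ,
      pdt (fun x t => h x t * u x t) x t
        + pdx (fun x t => h x t * (u x t) ^ 2 + h x t * pbar x t) x t
        + g * h x t * pdx h x t + (g * h x t + pb x t) * deriv zb x = 0)
    (momz : ∀ x t : ℝ,
      pdt (fun x t => h x t * w x t) x t
        + pdx (fun x t => h x t * u x t * w x t) x t = pb x t)
    (sigma : ∀ x t : ℝ,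
      pdt (fun x t => h x t * sg x t) x t
        + pdx (fun x t => h x t * u x t * sg x t) x t
      = -6 * pb x t + 12 * pbar x t) :
    ∀ x t : ℝ,
      pdt (fun x t => h x t / 2 * ((u x t) ^ 2 + (w x t) ^ 2 + (sg x t) ^ 2 / 12)) x t
        + pdx (fun x t =>
            u x t * (h x t / 2) * ((u x t) ^ 2 + (w x t) ^ 2 + (sg x t) ^ 2 / 12)
              + u x t * (g * (h x t) ^ 2 / 2) + u x t * h x t * pbar x t) x t
        - h x t * pbar x t * pdx u x t
        - g * (h x t) ^ 2 / 2 * pdx u x t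
        + u x t * (g * h x t + pb x t) * deriv zb x
        - w x t * pb x t + sg x t * pb x t / 2 - sg x t * pbar x t = 0 := by
  intro x t
  have Hx := hasDerivAt_pdx h hh x t
  have Ux := hasDerivAt_pdx u hu x t
  have Wx := hasDerivAt_pdx w hw x t
  have Sx := hasDerivAt_pdx sg hsg x t
  have Px := hasDerivAt_pdx pbar hpbar x t
  have Ht := hasDerivAt_pdt h hh x t
  have Ut := hasDerivAt_pdt u hu x t
  have Wt := hasDerivAt_pdt w hw x t
  have St := hasDerivAt_pdt sg hsg x t
  -- rewrite the equations in terms of atomic derivatives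
  have e_mass := mass x t
  rw [show pdx (fun x t => h x t * u x t) x t
      = pdx h x t * u x t + h x t * pdx u x t from (Hx.mul Ux).deriv] at e_mass
  have e_momx := momx x t
  rw [show pdt (fun x t => h x t * u x t) x t
      = pdt h x t * u x t + h x t * pdt u x t from (Ht.mul Ut).deriv,
    show pdx (fun x t => h x t * (u x t) ^ 2 + h x t * pbar x t) x t
      = (pdx h x t * u x t ^ 2 + h x t * ((2 : ℕ) * u x t ^ 1 * pdx u x t))
        + (pdx h x t * pbar x t + h x t * pdx pbar x t)
      from ((Hx.mul (Ux.pow 2)).add (Hx.mul Px)).deriv] at e_momx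
  have e_momz := momz x t
  rw [show pdt (fun x t => h x t * w x t) x t
      = pdt h x t * w x t + h x t * pdt w x t from (Ht.mul Wt).deriv,
    show pdx (fun x t => h x t * u x t * w x t) x t
      = (pdx h x t * u x t + h x t * pdx u x t) * w x t + h x t * u x t * pdx w x t
      from ((Hx.mul Ux).mul Wx).deriv] at e_momz
  have e_sigma := sigma x t
  rw [show pdt (fun x t => h x t * sg x t) x t
      = pdt h x t * sg x t + h x t * pdt sg x t from (Ht.mul St).deriv,
    show pdx (fun x t => h x t * u x t * sg x t) x t
      = (pdx h x t * u x t + h x t * pdx u x t) * sg x t + h x t * u x t * pdx sg x t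
      from ((Hx.mul Ux).mul Sx).deriv] at e_sigma
  -- rewrite the goal derivatives
  rw [show pdt (fun x t => h x t / 2 * ((u x t) ^ 2 + (w x t) ^ 2 + (sg x t) ^ 2 / 12)) x t
      = pdt h x t / 2 * ((u x t) ^ 2 + (w x t) ^ 2 + (sg x t) ^ 2 / 12)
        + h x t / 2 * (((2 : ℕ) * u x t ^ 1 * pdt u x t + (2 : ℕ) * w x t ^ 1 * pdt w x t)
          + ((2 : ℕ) * sg x t ^ 1 * pdt sg x t) / 12)
      from ((Ht.div_const 2).mul (((Ut.pow 2).add (Wt.pow 2)).add ((St.pow 2).div_const 12))).deriv,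
    show pdx (fun x t =>
            u x t * (h x t / 2) * ((u x t) ^ 2 + (w x t) ^ 2 + (sg x t) ^ 2 / 12)
              + u x t * (g * (h x t) ^ 2 / 2) + u x t * h x t * pbar x t) x t
      = (((pdx u x t * (h x t / 2) + u x t * (pdx h x t / 2))
            * ((u x t) ^ 2 + (w x t) ^ 2 + (sg x t) ^ 2 / 12)
          + u x t * (h x t / 2) * (((2 : ℕ) * u x t ^ 1 * pdx u x t
              + (2 : ℕ) * w x t ^ 1 * pdx w x t) + ((2 : ℕ) * sg x t ^ 1 * pdx sg x t) / 12))
        + (pdx u x t * (g * (h x t) ^ 2 / 2)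
            + u x t * (g * ((2 : ℕ) * h x t ^ 1 * pdx h x t) / 2)))
        + ((pdx u x t * h x t + u x t * pdx h x t) * pbar x t + u x t * h x t * pdx pbar x t)
      from (((((Ux.mul (Hx.div_const 2)).mul
          (((Ux.pow 2).add (Wx.pow 2)).add ((Sx.pow 2).div_const 12))).add
        (Ux.mul (((Hx.pow 2).const_mul g).div_const 2))).add
        ((Ux.mul Hx).mul Px))).deriv]
  push_cast
  linear_combination u x t * e_momx + w x t * e_momz + sg x t / 12 * e_sigma
    - ((u x t) ^ 2 + (w x t) ^ 2 + (sg x t) ^ 2 / 12) / 2 * e_mass
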